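/- Let n ≥ 0 and let X be a globular set. Let ∼ be the equivalence relation on X_n generated by: x ∼ y whenever there exists c ∈ X_{n+1} with s(c) = x and t(c) = y. Then the component of the unit eta_X : X → t_n^* t_{n!} X in each degree k < n is a bijection X_k → (t_{n!} X)(k), and in degree n the component X_n → (t_{n!} X)(n) is surjective and induces a bijection X_n/∼ ≅ (t_{n!} X)(n). -/

import Mathlib

open CategoryTheory CategoryTheory.Limits Opposite

/-- Morphisms of the globe category. -/
inductive GlobeHom : ℕ → ℕ → Type where
  | ident (m : ℕ) : GlobeHom m m
  | sig {m n : ℕ} (h : m < n) : GlobeHom m n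
  | tau {m n : ℕ} (h : m < n) : GlobeHom m n

/-- Composition in the globe category: determined by the inner factor. -/
def GlobeHom.comp : {a b c : ℕ} → GlobeHom a b → GlobeHom b c → GlobeHom a c
  | _, _, _, .ident _, g => g
  | _, _, _, .sig h, .ident _ => .sig h
  | _, _, _, .sig h, .sig h' => .sig (h.trans h')
  | _, _, _, .sig h, .tau h' => .sig (h.trans h')
  | _, _, _, .tau h, .ident _ => .tau h
  | _, _, _, .tau h, .sig h' => .tau (h.trans h')
  | _, _, _, .tau h, .tau h' => .tau (h.trans h')

lemma GlobeHom.comp_assoc : ∀ {a b c d : ℕ} (f : GlobeHom a b) (g : GlobeHom b c)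
    (h : GlobeHom c d), (f.comp g).comp h = f.comp (g.comp h) := by
  intro a b c d f g h
  cases f <;> cases g <;> cases h <;> rfl

lemma GlobeHom.le : ∀ {a b : ℕ}, GlobeHom a b → a ≤ b
  | _, _, .ident _ => le_rfl
  | _, _, .sig h => h.le
  | _, _, .tau h => h.le

/-- The globe category `G`: objects are natural numbers. -/
def Globe : Type := ℕ

instance : Category Globe where
  Hom m n := GlobeHom m n
  id m := GlobeHom.ident m
  comp f g := f.comp g
  id_comp _ := rfl
  comp_id := by rintro _ _ (_|_|_) <;> rfl
  assoc f g h := GlobeHom.comp_assoc f g h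

/-- The object of `Globe` corresponding to `k : ℕ`. -/
def gl (k : ℕ) : Globe := k

/-- The underlying natural number of an object of `Globe`. -/
def gval (m : Globe) : ℕ := m

/-- Globular sets: presheaves on the globe category. -/
abbrev GlobSet := Globeᵒᵖ ⥤ Type

/-- The source map `X_{k+1} → X_k` of a globular set. -/
def gsrc (X : GlobSet) (k : ℕ) : X.obj (op (gl (k+1))) → X.obj (op (gl k)) :=
  X.map (Quiver.Hom.op (show gl k ⟶ gl (k+1) from GlobeHom.sig (Nat.lt_succ_self k)))

/-- The target map `X_{k+1} → X_k` of a globular set. -/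
def gtgt (X : GlobSet) (k : ℕ) : X.obj (op (gl (k+1))) → X.obj (op (gl k)) :=
  X.map (Quiver.Hom.op (show gl k ⟶ gl (k+1) from GlobeHom.tau (Nat.lt_succ_self k)))

/-- Two `k`-cells are parallel if `k = 0` or they have the same source and target. -/
def Parallel (X : GlobSet) : (k : ℕ) → X.obj (op (gl k)) → X.obj (op (gl k)) → Prop
  | 0, _, _ => True
  | (k+1), x, y => gsrc X k x = gsrc X k y ∧ gtgt X k x = gtgt X k y

/-- The full subcategory `G_n` of the globe category on objects `≤ n`. -/
def GlobeLE (n : ℕ) := ObjectProperty.FullSubcategory (fun m : Globe => gval m ≤ n)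

instance (n : ℕ) : Category (GlobeLE n) := ObjectProperty.FullSubcategory.category _

/-- The inclusion `ι_n : G_n ⥤ G`. -/
def iotaGlobe (n : ℕ) : GlobeLE n ⥤ Globe := ObjectProperty.ι _

/-- A morphism of globes coming from an equality of dimensions. -/
def GlobeHom.ofEq : {a b : ℕ} → a = b → GlobeHom a b
  | _, _, rfl => .ident _

/-- A tag distinguishing the three kinds of globe morphisms. -/
def GlobeHom.tag : {a b : ℕ} → GlobeHom a b → ℕ
  | _, _, .ident _ => 0
  | _, _, .sig _ => 1
  | _, _, .tau _ => 2

lemma GlobeHom.ext_tag : ∀ {a b : ℕ} (f g : GlobeHom a b), f.tag = g.tag → f = g := by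
  intro a b f g h
  cases f <;> cases g <;> simp_all [GlobeHom.tag]

lemma GlobeHom.tag_comp : ∀ {a b c : ℕ} (f : GlobeHom a b) (g : GlobeHom b c),
    (f.comp g).tag = if f.tag = 0 then g.tag else f.tag := by
  intro a b c f g
  cases f <;> cases g <;> simp [GlobeHom.comp, GlobeHom.tag]

lemma GlobeHom.tag_ofEq {a b : ℕ} (h : a = b) : (GlobeHom.ofEq h).tag = 0 := by
  cases h; rfl

/-- The truncation of a globe morphism. -/
def GlobeHom.trunc (n : ℕ) : {a b : ℕ} → GlobeHom a b → GlobeHom (min a n) (min b n)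
  | _, _, .ident m => .ident _
  | a, b, .sig h => if h' : min a n < min b n then .sig h' else .ofEq (by omega)
  | a, b, .tau h => if h' : min a n < min b n then .tau h' else .ofEq (by omega)

lemma GlobeHom.tag_trunc (n : ℕ) : ∀ {a b : ℕ} (f : GlobeHom a b),
    (f.trunc n).tag = if min a n < min b n then f.tag else 0 := by
  intro a b f
  cases f with
  | ident => simp [GlobeHom.trunc, GlobeHom.tag]
  | sig h =>
      rw [GlobeHom.trunc]
      split
      · simp_all [GlobeHom.tag]
      · rw [GlobeHom.tag_ofEq]
  | tau h =>
      rw [GlobeHom.trunc]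
      split
      · simp_all [GlobeHom.tag]
      · rw [GlobeHom.tag_ofEq]

/-- The truncation functor `t_n : G ⥤ G_n`. -/
def truncFunctor (n : ℕ) : Globe ⥤ GlobeLE n where
  obj k := ⟨gl (min (gval k) n), min_le_right _ _⟩
  map {a b} f := ⟨GlobeHom.trunc n f⟩
  map_id _ := rfl
  map_comp {a b c} f g := by
    change GlobeHom (gval a) (gval b) at f
    change GlobeHom (gval b) (gval c) at g
    apply ObjectProperty.hom_ext
    apply GlobeHom.ext_tag
    have hab := GlobeHom.le f
    have hbc := GlobeHom.le g
    show ((f.comp g).trunc n).tag = ((f.trunc n).comp (g.trunc n)).tag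
    erw [GlobeHom.tag_trunc, GlobeHom.tag_comp, GlobeHom.tag_comp, GlobeHom.tag_trunc,
      GlobeHom.tag_trunc]
    cases f <;> cases g <;> simp [GlobeHom.tag] <;> split_ifs <;> omega

/-- The precomposition functor `t_n^*`. -/
def tStar (n : ℕ) : ((GlobeLE n)ᵒᵖ ⥤ Type) ⥤ GlobSet :=
  (Functor.whiskeringLeft _ _ _).obj (truncFunctor n).op

/-- The left Kan extension functor `t_{n!}`, left adjoint of `t_n^*`. -/
noncomputable def tLan (n : ℕ) : GlobSet ⥤ ((GlobeLE n)ᵒᵖ ⥤ Type) :=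
  (truncFunctor n).op.lan

/-- The adjunction `t_{n!} ⊣ t_n^*`. -/
noncomputable def tAdj (n : ℕ) : tLan n ⊣ tStar n :=
  Functor.lanAdjunction _ _

/-- A globular set is `n`-truncated if the unit of `t_{n!} ⊣ t_n^*` is an isomorphism at it. -/
def IsTruncated (n : ℕ) (X : GlobSet) : Prop := IsIso ((tAdj n).unit.app X)

/-- The restriction functor `ι_n^*`. -/
def iotaStar (n : ℕ) : GlobSet ⥤ ((GlobeLE n)ᵒᵖ ⥤ Type) :=
  (Functor.whiskeringLeft _ _ _).obj (iotaGlobe n).op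

/-- The right Kan extension functor `ι_{n*}`, right adjoint of `ι_n^*`. -/
noncomputable def iotaRan (n : ℕ) : ((GlobeLE n)ᵒᵖ ⥤ Type) ⥤ GlobSet :=
  (iotaGlobe n).op.ran

/-- The adjunction `ι_n^* ⊣ ι_{n*}`. -/
noncomputable def iotaAdj (n : ℕ) : iotaStar n ⊣ iotaRan n :=
  Functor.ranAdjunction _ _

/-- A globular set is `n`-coskeletal if the unit of `ι_n^* ⊣ ι_{n*}` is an isomorphism at it. -/
def IsCoskeletal (n : ℕ) (X : GlobSet) : Prop := IsIso ((iotaAdj n).unit.app X)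

/-- The representable globular set `D_k`. -/
def disk (k : ℕ) : GlobSet := yoneda.obj (gl k)

/-- The boundary `∂D_k` of the `k`-disk. -/
def boundary (k : ℕ) : GlobSet where
  obj m := { f : GlobeHom (gval m.unop) k // gval m.unop < k }
  map {m m'} g := TypeCat.ofHom (fun f => ⟨GlobeHom.comp g.unop f.1, lt_of_le_of_lt (GlobeHom.le g.unop) f.2⟩)
  map_id m := by ext f; rfl
  map_comp {m m' m''} g h := by
    ext f; exact GlobeHom.comp_assoc h.unop g.unop f.1

/-- The boundary inclusion `∂D_k ⟶ D_k`. -/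
def boundaryIncl (k : ℕ) : boundary k ⟶ disk k where
  app m := TypeCat.ofHom (fun f => f.1)
  naturality m m' g := by ext f; rfl

section Statement0Aux

lemma GlobeHom.eq_ident_of_self {a : ℕ} (f : GlobeHom a a) : f = GlobeHom.ident a := by
  cases f with
  | ident => rfl
  | sig h => exact absurd h (lt_irrefl a)
  | tau h => exact absurd h (lt_irrefl a)

/-- View a `GlobeHom` as a morphism in `Globe`. -/
abbrev ghom {a b : ℕ} (f : GlobeHom a b) : gl a ⟶ gl b := f

lemma map_ident_op (X : GlobSet) (a : ℕ) :
    ⇑(X.map (Quiver.Hom.op (ghom (GlobeHom.ident a)))) = id := by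
  funext x; exact FunctorToTypes.map_id_apply X x

lemma map_tag0_bijective (X : GlobSet) {a b : ℕ} (f : GlobeHom a b) (h : f.tag = 0) :
    Function.Bijective (X.map (Quiver.Hom.op (ghom f))) := by
  cases f with
  | ident => rw [map_ident_op]; exact Function.bijective_id
  | sig h' => simp [GlobeHom.tag] at h
  | tau h' => simp [GlobeHom.tag] at h

lemma map_map (X : GlobSet) {a b c : ℕ} (f : GlobeHom a b) (g : GlobeHom b c)
    (x : X.obj (op (gl c))) :
    X.map (Quiver.Hom.op (ghom f)) (X.map (Quiver.Hom.op (ghom g)) x)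
      = X.map (Quiver.Hom.op (ghom (f.comp g))) x := by
  rw [← FunctorToTypes.map_comp_apply]
  rfl

/-- The relation on `X_m`: trivial below level `n`, "connected by an `(m+1)`-cell" at `n`. -/
def Rn (n : ℕ) (X : GlobSet) (m : ℕ) (a b : X.obj (op (gl m))) : Prop :=
  n ≤ m ∧ ∃ c : X.obj (op (gl (m+1))), gsrc X m c = a ∧ gtgt X m c = b

lemma eqvGen_eq {α : Type} {r : α → α → Prop} (h : ∀ a b, r a b → a = b) {a b : α}
    (hg : Relation.EqvGen r a b) : a = b := by
  induction hg with
  | rel x y hxy => exact h _ _ hxy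
  | refl => rfl
  | symm _ _ _ ih => exact ih.symm
  | trans _ _ _ _ _ ih1 ih2 => exact ih1.trans ih2

lemma quot_mk_bijective {α : Type} {r : α → α → Prop} (h : ∀ a b, r a b → a = b) :
    Function.Bijective (Quot.mk r) := by
  refine ⟨fun a b hab => eqvGen_eq h (Quot.eq.mp hab), fun q => Quot.exists_rep q⟩

lemma quot_map_eq (n : ℕ) (X : GlobSet) (m a : ℕ) (hmn : m ≤ n) (g1 g2 : GlobeHom m a)
    (hlt : m < n → g1 = g2) (x : X.obj (op (gl a))) :
    Quot.mk (Rn n X m) (X.map (Quiver.Hom.op (ghom g1)) x)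
      = Quot.mk (Rn n X m) (X.map (Quiver.Hom.op (ghom g2)) x) := by
  rcases lt_or_eq_of_le hmn with h | h
  · rw [hlt h]
  · subst h
    have han : m ≤ a := g1.le
    rcases eq_or_lt_of_le han with ha | ha
    · subst ha
      rw [GlobeHom.eq_ident_of_self g1, GlobeHom.eq_ident_of_self g2]
    · set d : GlobeHom (m+1) a :=
        if hd : m + 1 < a then GlobeHom.sig hd else GlobeHom.ofEq (by omega) with hd
      have htagd : ∀ h0 : GlobeHom (m+1) a, True := fun _ => trivial
      have hs : ∀ h' : m < a,
          X.map (Quiver.Hom.op (ghom (GlobeHom.sig h'))) x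
            = gsrc X m (X.map (Quiver.Hom.op (ghom d)) x) := by
        intro h'
        have he : (GlobeHom.sig h' : GlobeHom m a)
            = (GlobeHom.sig (Nat.lt_succ_self m)).comp d := by
          apply GlobeHom.ext_tag
          rw [GlobeHom.tag_comp]
          simp [GlobeHom.tag]
        rw [he, ← map_map]
        rfl
      have ht : ∀ h' : m < a,
          X.map (Quiver.Hom.op (ghom (GlobeHom.tau h'))) x
            = gtgt X m (X.map (Quiver.Hom.op (ghom d)) x) := by
        intro h'
        have he : (GlobeHom.tau h' : GlobeHom m a)
            = (GlobeHom.tau (Nat.lt_succ_self m)).comp d := by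
          apply GlobeHom.ext_tag
          rw [GlobeHom.tag_comp]
          simp [GlobeHom.tag]
        rw [he, ← map_map]
        rfl
      have hrel : Quot.mk (Rn m X m) (gsrc X m (X.map (Quiver.Hom.op (ghom d)) x))
          = Quot.mk (Rn m X m) (gtgt X m (X.map (Quiver.Hom.op (ghom d)) x)) :=
        Quot.sound ⟨le_rfl, _, rfl, rfl⟩
      cases g1 with
      | ident => omega
      | sig h1 =>
        cases g2 with
        | ident => omega
        | sig h2 => rw [hs h1]
        | tau h2 => rw [hs h1, ht h2]; exact hrel
      | tau h1 =>
        cases g2 with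
        | ident => omega
        | sig h2 => rw [ht h1, hs h2]; exact hrel.symm
        | tau h2 => rw [ht h1]
lemma Yn_wd (n : ℕ) (X : GlobSet) (a b : ℕ) (hb : b ≤ n) (h : GlobeHom b a) :
    ∀ p q, Rn n X a p q →
      Quot.mk (Rn n X b) (X.map (Quiver.Hom.op (ghom h)) p)
        = Quot.mk (Rn n X b) (X.map (Quiver.Hom.op (ghom h)) q) := by
  rintro p q ⟨hn, c, rfl, rfl⟩
  show Quot.mk _ (X.map (Quiver.Hom.op (ghom h))
      (X.map (Quiver.Hom.op (ghom (GlobeHom.sig (Nat.lt_succ_self a)))) c))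
    = Quot.mk _ (X.map (Quiver.Hom.op (ghom h))
      (X.map (Quiver.Hom.op (ghom (GlobeHom.tau (Nat.lt_succ_self a)))) c))
  rw [map_map, map_map]
  apply quot_map_eq n X b (a+1) hb
  intro hbn
  apply GlobeHom.ext_tag
  rw [GlobeHom.tag_comp, GlobeHom.tag_comp]
  cases h with
  | ident => omega
  | sig h1 => simp [GlobeHom.tag]
  | tau h1 => simp [GlobeHom.tag]

/-- The explicit reflection of `X` into `n`-truncated globular sets. -/
def Yn (n : ℕ) (X : GlobSet) : (GlobeLE n)ᵒᵖ ⥤ Type where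
  obj m := Quot (Rn n X (gval m.unop.obj))
  map {m m'} g := TypeCat.ofHom (Quot.lift
    (fun x => Quot.mk _ (X.map (Quiver.Hom.op (ghom
        (show GlobeHom (gval m'.unop.obj) (gval m.unop.obj) from g.unop.hom))) x))
    (fun p q hpq => Yn_wd n X _ _ m'.unop.property g.unop.hom p q hpq))
  map_id m := by
    ext q
    induction q using Quot.ind with
    | _ x => exact congrArg (Quot.mk _) (FunctorToTypes.map_id_apply X x)
  map_comp {m m' m''} g h := by
    ext q
    induction q using Quot.ind with
    | _ x => exact congrArg (Quot.mk _) (map_map X _ _ x).symm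

/-- The map `min k n → k` in the globe category. -/
def gmor (n k : ℕ) : GlobeHom (min k n) k :=
  if h : min k n < k then GlobeHom.sig h else GlobeHom.ofEq (by omega)

lemma tag_gmor (n k : ℕ) : (gmor n k).tag = if min k n < k then 1 else 0 := by
  unfold gmor; split
  · simp [GlobeHom.tag]
  · rw [GlobeHom.tag_ofEq]

lemma gmor_comp_eq (n a b : ℕ) (h : GlobeHom b a) (hbn : min b n < n) :
    (gmor n b).comp h = ((h.trunc n).comp (gmor n a)) := by
  have hba := h.le
  apply GlobeHom.ext_tag
  rw [GlobeHom.tag_comp, GlobeHom.tag_comp, GlobeHom.tag_trunc, tag_gmor, tag_gmor]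
  cases h <;> simp only [GlobeHom.tag, Nat.min_def] <;> split_ifs <;> first | omega | simp_all

/-- The candidate unit `X ⟶ t_n^* (Yn n X)`. -/
def etaP (n : ℕ) (X : GlobSet) : X ⟶ (tStar n).obj (Yn n X) where
  app k := TypeCat.ofHom (fun x => Quot.mk _ (X.map (Quiver.Hom.op (ghom (gmor n (gval k.unop)))) x))
  naturality k k' f := by
    ext x
    exact (congrArg (Quot.mk _) (map_map X (gmor n (gval k'.unop)) f.unop x)).trans
      ((quot_map_eq n X (min (gval k'.unop) n) (gval k.unop) (min_le_right _ _)
          ((gmor n (gval k'.unop)).comp f.unop)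
          (((f.unop).trunc n).comp (gmor n (gval k.unop)))
          (fun hbn => gmor_comp_eq n (gval k.unop) (gval k'.unop) f.unop hbn) x).trans
        (congrArg (Quot.mk _) (map_map X ((f.unop).trunc n) (gmor n (gval k.unop)) x).symm))
lemma mkLE_eq (n : ℕ) {a b : ℕ} (e : a = b) (ha : gval (gl a) ≤ n) (hb : gval (gl b) ≤ n) :
    (⟨gl a, ha⟩ : GlobeLE n) = ⟨gl b, hb⟩ := by subst e; rfl

lemma globeLE_eta (n : ℕ) (m : (GlobeLE n)ᵒᵖ) :
    m.unop = (⟨gl (min (gval m.unop.obj) n), min_le_right _ _⟩ : GlobeLE n) :=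
  (mkLE_eq n (Nat.min_eq_left m.unop.property) (min_le_right _ _) m.unop.property).symm

lemma tag_eqToHomLE (n : ℕ) {A B : GlobeLE n} (e : A = B) :
    GlobeHom.tag (CategoryTheory.eqToHom e).hom = 0 := by subst e; rfl

lemma trunc_sig_eq_trunc_tau (n mo : ℕ) (hn : n ≤ mo) :
    (GlobeHom.sig (Nat.lt_succ_self mo)).trunc n
      = (GlobeHom.tau (Nat.lt_succ_self mo)).trunc n := by
  apply GlobeHom.ext_tag
  rw [GlobeHom.tag_trunc, GlobeHom.tag_trunc]
  have h : ¬ (min mo n < min (mo+1) n) := by omega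
  rw [if_neg h, if_neg h]

lemma alpha_st (n : ℕ) (X : GlobSet) (Z : (GlobeLE n)ᵒᵖ ⥤ Type)
    (α : X ⟶ (tStar n).obj Z) (mo : ℕ) (hn : n ≤ mo) (c : X.obj (op (gl (mo+1)))) :
    α.app (op (gl mo)) (gsrc X mo c) = α.app (op (gl mo)) (gtgt X mo c) := by
  have h1 := ConcreteCategory.congr_hom
    (α.naturality (Quiver.Hom.op (ghom (GlobeHom.sig (Nat.lt_succ_self mo))))) c
  have h2 := ConcreteCategory.congr_hom
    (α.naturality (Quiver.Hom.op (ghom (GlobeHom.tau (Nat.lt_succ_self mo))))) c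
  simp only [types_comp_apply] at h1 h2
  refine h1.trans (Eq.trans ?_ h2.symm)
  exact congrArg (fun u : GlobeHom (min mo n) (min (mo+1) n) =>
    Z.map (Quiver.Hom.op (show (truncFunctor n).obj (gl mo) ⟶ (truncFunctor n).obj (gl (mo+1))
      from ⟨u⟩)) (α.app (op (gl (mo+1))) c)) (trunc_sig_eq_trunc_tau n mo hn)

lemma square_eq (n a b : ℕ) (ha : a ≤ n) (hb : b ≤ n) (h : GlobeHom b a)
    (f1 : GlobeHom b (min b n)) (hf1 : f1.tag = 0)
    (f2 : GlobeHom a (min a n)) (hf2 : f2.tag = 0) :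
    GlobeHom.comp f1 (h.trunc n) = GlobeHom.comp h f2 := by
  apply GlobeHom.ext_tag
  rw [GlobeHom.tag_comp, GlobeHom.tag_comp, GlobeHom.tag_trunc, hf1, hf2]
  cases h <;> simp only [GlobeHom.tag, Nat.min_def] <;> split_ifs <;> first | omega | simp_all

/-- The universal map out of `Yn n X` induced by `α : X ⟶ t_n^* Z`. -/
def toZmap (n : ℕ) (X : GlobSet) (Z : (GlobeLE n)ᵒᵖ ⥤ Type) (α : X ⟶ (tStar n).obj Z) :
    Yn n X ⟶ Z where
  app m := TypeCat.ofHom (Quot.lift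
    (fun x => Z.map (Quiver.Hom.op (CategoryTheory.eqToHom (globeLE_eta n m)))
        (α.app (op (gl (gval m.unop.obj))) x))
    (by
      rintro p q ⟨hn, c, rfl, rfl⟩
      exact congrArg _ (alpha_st n X Z α _ hn c)))
  naturality m m' g := by
    ext q
    induction q using Quot.ind with
    | _ x =>
      have hnat := ConcreteCategory.congr_hom (α.naturality (Quiver.Hom.op (ghom
        (show GlobeHom (gval m'.unop.obj) (gval m.unop.obj) from g.unop.hom)))) x
      simp only [types_comp_apply] at hnat
      show Z.map (Quiver.Hom.op (CategoryTheory.eqToHom (globeLE_eta n m')))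
          (α.app (op (gl (gval m'.unop.obj)))
            (X.map (Quiver.Hom.op (ghom (show GlobeHom (gval m'.unop.obj) (gval m.unop.obj) from g.unop.hom))) x))
        = Z.map g (Z.map (Quiver.Hom.op (CategoryTheory.eqToHom (globeLE_eta n m)))
            (α.app (op (gl (gval m.unop.obj))) x))
      rw [hnat]
      show Z.map (Quiver.Hom.op (CategoryTheory.eqToHom (globeLE_eta n m')))
          (Z.map (Quiver.Hom.op ((truncFunctor n).map
              (ghom (show GlobeHom (gval m'.unop.obj) (gval m.unop.obj) from g.unop.hom))))
            (α.app (op (gl (gval m.unop.obj))) x))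
        = Z.map g (Z.map (Quiver.Hom.op (CategoryTheory.eqToHom (globeLE_eta n m)))
            (α.app (op (gl (gval m.unop.obj))) x))
      have hsq : GlobeHom.comp (CategoryTheory.eqToHom (globeLE_eta n m')).hom
          ((show GlobeHom (gval m'.unop.obj) (gval m.unop.obj) from g.unop.hom).trunc n)
          = GlobeHom.comp (show GlobeHom (gval m'.unop.obj) (gval m.unop.obj) from g.unop.hom)
            (CategoryTheory.eqToHom (globeLE_eta n m)).hom :=
        square_eq n (gval m.unop.obj) (gval m'.unop.obj) m.unop.property m'.unop.property
          g.unop.hom (CategoryTheory.eqToHom (globeLE_eta n m')).hom (tag_eqToHomLE n _)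
          (CategoryTheory.eqToHom (globeLE_eta n m)).hom (tag_eqToHomLE n _)
      have hmor : ((truncFunctor n).map (ghom (show GlobeHom (gval m'.unop.obj)
              (gval m.unop.obj) from g.unop.hom))).op
            ≫ (Quiver.Hom.op (CategoryTheory.eqToHom (globeLE_eta n m')))
          = (Quiver.Hom.op (CategoryTheory.eqToHom (globeLE_eta n m))) ≫ g :=
        Quiver.Hom.unop_inj (by apply ObjectProperty.hom_ext; exact hsq)
      exact (FunctorToTypes.map_comp_apply Z _ _ _).symm.trans
        ((ConcreteCategory.congr_hom (congrArg Z.map hmor) _).trans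
          (FunctorToTypes.map_comp_apply Z _ _ _))
lemma fact (n : ℕ) (X : GlobSet) (Z : (GlobeLE n)ᵒᵖ ⥤ Type) (α : X ⟶ (tStar n).obj Z) :
    etaP n X ≫ (tStar n).map (toZmap n X Z α) = α := by
  apply NatTrans.ext
  funext k
  ext x
  have hnat := ConcreteCategory.congr_hom (α.naturality (Quiver.Hom.op (ghom (gmor n (gval k.unop))))) x
  show Z.map (Quiver.Hom.op (CategoryTheory.eqToHom
        (globeLE_eta n ((truncFunctor n).op.obj (op (gl (gval k.unop)))))))
      (α.app (op (gl (min (gval k.unop) n)))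
        (X.map (Quiver.Hom.op (ghom (gmor n (gval k.unop)))) x))
    = α.app k x
  refine (congrArg (fun y => Z.map (Quiver.Hom.op (CategoryTheory.eqToHom
        (globeLE_eta n ((truncFunctor n).op.obj (op (gl (gval k.unop))))))) y) hnat).trans ?_
  show Z.map (Quiver.Hom.op (CategoryTheory.eqToHom
        (globeLE_eta n ((truncFunctor n).op.obj (op (gl (gval k.unop)))))))
      (Z.map (Quiver.Hom.op ((truncFunctor n).map (ghom (gmor n (gval k.unop)))))
        (α.app k x))
    = α.app k x
  have hmor : ((truncFunctor n).map (ghom (gmor n (gval k.unop)))).op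
        ≫ (Quiver.Hom.op (CategoryTheory.eqToHom
          (globeLE_eta n ((truncFunctor n).op.obj (op (gl (gval k.unop)))))))
      = 𝟙 ((truncFunctor n).op.obj (op (gl (gval k.unop)))) :=
    Quiver.Hom.unop_inj (by apply ObjectProperty.hom_ext; exact GlobeHom.eq_ident_of_self _)
  exact (FunctorToTypes.map_comp_apply Z _ _ _).symm.trans
    ((ConcreteCategory.congr_hom (congrArg Z.map hmor) _).trans
      (ConcreteCategory.congr_hom (Z.map_id _) _))

lemma etaP_app_surjective (n : ℕ) (X : GlobSet) (k : ℕ) (hk : k ≤ n) :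
    Function.Surjective ((etaP n X).app (op (gl k))) := by
  intro q
  obtain ⟨y, hy⟩ := Quot.exists_rep q
  obtain ⟨x, hx⟩ := (map_tag0_bijective X (gmor n k)
    (by rw [tag_gmor, if_neg (by omega)])).2 y
  refine ⟨x, ?_⟩
  show Quot.mk (Rn n X (min k n)) (X.map (Quiver.Hom.op (ghom (gmor n k))) x) = q
  rw [hx]
  exact hy

lemma uniq (n : ℕ) (X : GlobSet) (Z : (GlobeLE n)ᵒᵖ ⥤ Type) (β₁ β₂ : Yn n X ⟶ Z)
    (h : etaP n X ≫ (tStar n).map β₁ = etaP n X ≫ (tStar n).map β₂) : β₁ = β₂ := by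
  apply NatTrans.ext
  funext m
  have happ : β₁.app ((truncFunctor n).op.obj (op (gl (gval m.unop.obj))))
      = β₂.app ((truncFunctor n).op.obj (op (gl (gval m.unop.obj)))) := by
    ext q
    obtain ⟨x, rfl⟩ := etaP_app_surjective n X (gval m.unop.obj) m.unop.property q
    exact ConcreteCategory.congr_hom (NatTrans.congr_app h (op (gl (gval m.unop.obj)))) x
  have e : ((truncFunctor n).op.obj (op (gl (gval m.unop.obj)))) = m :=
    congrArg Opposite.op (globeLE_eta n m).symm
  exact e ▸ happ
lemma transfer (n : ℕ) (X : GlobSet) (m : ℕ) (em : m = n) (g : GlobeHom m n)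
    (x y : X.obj (op (gl n))) :
    (Quot.mk (Rn n X m) (X.map (Quiver.Hom.op (ghom g)) x)
      = Quot.mk (Rn n X m) (X.map (Quiver.Hom.op (ghom g)) y))
      ↔ Relation.EqvGen
          (fun a b => ∃ c : X.obj (op (gl (n+1))), gsrc X n c = a ∧ gtgt X n c = b) x y := by
  subst em
  rw [GlobeHom.eq_ident_of_self g, map_ident_op]
  simp only [id_eq]
  rw [Quot.eq]
  constructor
  · exact fun hh => Relation.EqvGen.mono (fun a b (hab : Rn m X m a b) => hab.2) _ _ hh
  · exact fun hh => Relation.EqvGen.mono (fun a b hab => (⟨le_rfl, hab⟩ : Rn m X m a b)) _ _ hh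

theorem statement0' (n : ℕ) (X : GlobSet) :
    (∀ k : ℕ, k < n →
      Function.Bijective (((tAdj n).unit.app X).app (op (gl k)))) ∧
    Function.Surjective (((tAdj n).unit.app X).app (op (gl n))) ∧
    (∀ x y : X.obj (op (gl n)),
      ((tAdj n).unit.app X).app (op (gl n)) x = ((tAdj n).unit.app X).app (op (gl n)) y ↔
        Relation.EqvGen
          (fun a b => ∃ c : X.obj (op (gl (n+1))), gsrc X n c = a ∧ gtgt X n c = b) x y) := by
  set η := (tAdj n).unit.app X with hη
  set v : (tLan n).obj X ⟶ Yn n X := ((tAdj n).homEquiv X (Yn n X)).symm (etaP n X) with hvdef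
  have hv : η ≫ (tStar n).map v = etaP n X := by
    have h0 := ((tAdj n).homEquiv X (Yn n X)).apply_symm_apply (etaP n X)
    rwa [Adjunction.homEquiv_unit] at h0
  set w : Yn n X ⟶ (tLan n).obj X := toZmap n X _ ((tAdj n).unit.app X) with hwdef
  have hw : etaP n X ≫ (tStar n).map w = η := fact n X _ _
  have hvw : v ≫ w = 𝟙 _ := by
    apply ((tAdj n).homEquiv X ((tLan n).obj X)).injective
    rw [Adjunction.homEquiv_unit, Adjunction.homEquiv_unit, CategoryTheory.Functor.map_comp,
      ← Category.assoc, ← hη, hv, hw]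
    exact ((congrArg (fun t => η ≫ t) ((tStar n).map_id ((tLan n).obj X))).trans
      (Category.comp_id η)).symm
  have hwv : w ≫ v = 𝟙 _ := by
    apply uniq n X _ _ _
    rw [CategoryTheory.Functor.map_comp, ← Category.assoc, hw, hv]
    exact ((congrArg (fun t => etaP n X ≫ t) ((tStar n).map_id (Yn n X))).trans
      (Category.comp_id _)).symm
  have hiso : IsIso v := ⟨w, hvw, hwv⟩
  have hbijv : ∀ k : Globeᵒᵖ, Function.Bijective (((tStar n).map v).app k) := by
    intro k
    rw [← CategoryTheory.isIso_iff_bijective]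
    infer_instance
  have hcomp : ∀ (k : Globeᵒᵖ) (x : X.obj k),
      ((tStar n).map v).app k (η.app k x) = (etaP n X).app k x :=
    fun k x => ConcreteCategory.congr_hom (NatTrans.congr_app hv k) x
  refine ⟨?_, ?_, ?_⟩
  · -- degree k < n
    intro k hk
    have hrel : ∀ a b, Rn n X (min k n) a b → a = b := fun a b hab => absurd hab.1 (by omega)
    have hmk : Function.Bijective ((etaP n X).app (op (gl k))) :=
      (quot_mk_bijective hrel).comp (map_tag0_bijective X (gmor n k)
        (by rw [tag_gmor, if_neg (by omega)]))
    constructor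
    · intro x y hxy
      apply hmk.1
      show (etaP n X).app (op (gl k)) x = (etaP n X).app (op (gl k)) y
      rw [← hcomp, ← hcomp, hxy]
    · intro z
      obtain ⟨x, hx⟩ := hmk.2 (((tStar n).map v).app (op (gl k)) z)
      refine ⟨x, (hbijv (op (gl k))).1 ?_⟩
      rw [hcomp]
      exact hx
  · -- degree n surjectivity
    intro z
    obtain ⟨x, hx⟩ := etaP_app_surjective n X n le_rfl (((tStar n).map v).app (op (gl n)) z)
    refine ⟨x, (hbijv (op (gl n))).1 ?_⟩
    rw [hcomp]
    exact hx
  · -- degree n relation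
    intro x y
    have hiff : η.app (op (gl n)) x = η.app (op (gl n)) y ↔
        (etaP n X).app (op (gl n)) x = (etaP n X).app (op (gl n)) y := by
      constructor
      · intro hxy; rw [← hcomp, ← hcomp, hxy]
      · intro hxy
        apply (hbijv (op (gl n))).1
        rw [hcomp, hcomp]
        exact hxy
    exact hiff.trans (transfer n X (min (gval (gl n)) n) (Nat.min_self n)
      (gmor n (gval (gl n))) x y)

end Statement0Aux

/-- For a globular set `X`, the unit `η_X : X ⟶ t_n^* t_{n!} X` is a
bijection in every degree `k < n`, and in degree `n` it is surjective and identifies exactly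
the `n`-cells related by the equivalence relation generated by the existence of a connecting
`(n+1)`-cell, i.e. it induces a bijection `X_n/∼ ≅ (t_{n!} X)(n)`. -/
theorem statement0 (n : ℕ) (X : GlobSet) :
    (∀ k : ℕ, k < n →
      Function.Bijective (((tAdj n).unit.app X).app (op (gl k)))) ∧
    Function.Surjective (((tAdj n).unit.app X).app (op (gl n))) ∧
    (∀ x y : X.obj (op (gl n)),
      ((tAdj n).unit.app X).app (op (gl n)) x = ((tAdj n).unit.app X).app (op (gl n)) y ↔
        Relation.EqvGen
          (fun a b => ∃ c : X.obj (op (gl (n+1))), gsrc X n c = a ∧ gtgt X n c = b) x y) := by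
  exact statement0' n X
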